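/- In a spider (a tree with exactly one vertex of degree greater than 2), every vertex has an escape path to some leaf; consequently for every k ≥ 1 and every vertex v there is a leaf ℓ with |I^k(v)| ≤ |I^k(ℓ)|. -/

import Mathlib

open scoped Classical

variable {V : Type*}

/-- `P = p 1, p 2, …, p n` is an escape path in `G` (from `p 1` to `p n`):
a path in `G` whose last vertex `p n` has degree 1 and whose vertices
`p i` for `2 ≤ i ≤ n - 2` have degree 2. -/
def IsEscapePath [Fintype V] (G : SimpleGraph V) (n : ℕ) (p : ℕ → V) : Prop :=
  1 ≤ n ∧ Set.InjOn p (Set.Icc 1 n) ∧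
  (∀ i, 1 ≤ i → i < n → G.Adj (p i) (p (i + 1))) ∧
  G.degree (p n) = 1 ∧
  ∀ i, 2 ≤ i → i ≤ n - 2 → G.degree (p i) = 2

/-- The flip of the path `p 1, …, p n`: it maps `p i` to `p (n + 1 - i)` and
fixes every vertex outside the path. -/
noncomputable def flipP (n : ℕ) (p : ℕ → V) : V → V := fun x =>
  if h : ∃ i, 1 ≤ i ∧ i ≤ n ∧ p i = x then p (n + 1 - h.choose) else x

/-- `s` is an independent set of `G`. -/
def IndepSet (G : SimpleGraph V) (s : Set V) : Prop :=
  ∀ x ∈ s, ∀ y ∈ s, x ≠ y → ¬ G.Adj x y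

/-- The star `I^k_G(u)`: the family of independent `k`-subsets of `G`
containing the vertex `u`. -/
noncomputable def star [Fintype V] (G : SimpleGraph V) (k : ℕ) (u : V) :
    Finset (Finset V) :=
  Finset.univ.filter
    (fun A : Finset V => A.card = k ∧ u ∈ A ∧
      ∀ x ∈ A, ∀ y ∈ A, x ≠ y → ¬ G.Adj x y)

section Aux
open SimpleGraph

lemma getVert_mem_support' {G : SimpleGraph V} {u v : V} (w : G.Walk u v) (i : ℕ) :
    w.getVert i ∈ w.support := by
  induction w generalizing i with
  | nil => simp [SimpleGraph.Walk.getVert]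
  | cons h q ih =>
    cases i with
    | zero => simp
    | succ n =>
      rw [Walk.getVert_cons_succ, Walk.support_cons]
      exact List.mem_cons_of_mem _ (ih n)

lemma getVert_inj' {G : SimpleGraph V} {u v : V} {w : G.Walk u v} (hw : w.IsPath)
    {i j : ℕ} (hi : i ≤ w.length) (hj : j ≤ w.length) (h : w.getVert i = w.getVert j) :
    i = j := by
  induction w generalizing i j with
  | nil => simp only [Walk.length_nil, Nat.le_zero] at hi hj; omega
  | cons hadj q ih =>
    rw [Walk.cons_isPath_iff] at hw
    cases i with
    | zero =>
      cases j with
      | zero => rfl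
      | succ m =>
        exfalso
        rw [Walk.getVert_zero, Walk.getVert_cons_succ] at h
        exact hw.2 (h ▸ getVert_mem_support' q m)
    | succ n =>
      cases j with
      | zero =>
        exfalso
        rw [Walk.getVert_zero, Walk.getVert_cons_succ] at h
        exact hw.2 (h ▸ getVert_mem_support' q n)
      | succ m =>
        rw [Walk.getVert_cons_succ, Walk.getVert_cons_succ] at h
        rw [Walk.length_cons] at hi hj
        exact congrArg Nat.succ (ih hw.1 (by omega) (by omega) h)

lemma concat_isPath' {G : SimpleGraph V} {u v w : V} {p : G.Walk u v} (hp : p.IsPath)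
    (h : G.Adj v w) (hw : w ∉ p.support) : (p.concat h).IsPath := by
  rw [Walk.isPath_def, Walk.support_concat]
  have := hp.support_nodup.concat hw
  rwa [List.concat_eq_append] at this

lemma exists_strong_escape [Fintype V] (G : SimpleGraph V) (hT : G.IsTree)
    (c : V) (hc : 3 ≤ G.degree c) (hcuniq : ∀ w : V, 3 ≤ G.degree w → w = c) (v : V) :
    ∃ (n : ℕ) (p : ℕ → V), 1 ≤ n ∧ Set.InjOn p (Set.Icc 1 n) ∧
      (∀ i, 1 ≤ i → i < n → G.Adj (p i) (p (i + 1))) ∧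
      G.degree (p n) = 1 ∧
      (∀ i, 2 ≤ i → i + 1 ≤ n → G.degree (p i) = 2) ∧ p 1 = v := by
  classical
  have hconn : G.Connected := hT.isConnected
  -- uniqueness of paths
  have huniq : ∀ {a b : V} (q q' : G.Walk a b), q.IsPath → q'.IsPath → q = q' := by
    intro a b q q' h h'
    exact congrArg Subtype.val (hT.IsAcyclic.path_unique ⟨q, h⟩ ⟨q', h'⟩)
  have hlen : ∀ {a b : V} (q : G.Walk a b), q.IsPath → q.length = G.dist a b := by
    intro a b q hq
    obtain ⟨q₀, hq₀, hd⟩ := hconn.exists_path_of_dist a b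
    rw [huniq q q₀ hq hq₀, hd]
  -- the set S of vertices whose (unique) path from c passes through v
  set S : Finset V := Finset.univ.filter
    (fun x => ∀ q : G.Walk c x, q.IsPath → v ∈ q.support) with hS
  have hvS : v ∈ S := by
    rw [hS, Finset.mem_filter]
    exact ⟨Finset.mem_univ _, fun q _ => q.end_mem_support⟩
  obtain ⟨ℓ, hℓS, hmax⟩ := S.exists_max_image (fun x => G.dist c x) ⟨v, hvS⟩
  obtain ⟨W, hWp, hWd⟩ := hconn.exists_path_of_dist c ℓ
  have hℓS' : ∀ q : G.Walk c ℓ, q.IsPath → v ∈ q.support := by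
    rw [hS, Finset.mem_filter] at hℓS; exact hℓS.2
  have hvW : v ∈ W.support := hℓS' W hWp
  -- every neighbor of ℓ is on W
  have h_extend : ∀ y, G.Adj ℓ y → y ∈ W.support := by
    intro y hy
    by_contra hyW
    have hW' : (W.concat hy).IsPath := concat_isPath' hWp hy hyW
    have hyS : y ∈ S := by
      rw [hS, Finset.mem_filter]
      refine ⟨Finset.mem_univ _, fun q hq => ?_⟩
      rw [huniq q (W.concat hy) hq hW', Walk.support_concat]
      simp [hvW]
    have h1 := hmax y hyS
    rw [← hlen W hWp, ← hlen (W.concat hy) hW', Walk.length_concat] at h1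
    omega
  -- ℓ is not c
  have hℓc : ℓ ≠ c := by
    intro h
    subst h
    have hW0 : W.length = 0 := by rw [hlen W hWp]; simp
    have : W.support = [ℓ] := by
      cases W with
      | nil => rfl
      | cons h q => simp at hW0
    obtain ⟨x, hx⟩ : ∃ x, G.Adj ℓ x := by
      have : 0 < G.degree ℓ := by omega
      rw [← card_neighborFinset_eq_degree, Finset.card_pos] at this
      obtain ⟨x, hx⟩ := this
      exact ⟨x, by rwa [mem_neighborFinset] at hx⟩
    have hx' := h_extend x hx
    rw [this] at hx'
    simp at hx'
    exact G.loopless.irrefl ℓ (hx' ▸ hx)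
  have hWlen : 1 ≤ W.length := by
    rcases Nat.eq_zero_or_pos W.length with h | h
    · exact absurd (Walk.eq_of_length_eq_zero h).symm hℓc
    · omega
  -- degree of ℓ is 1
  have hpen : G.Adj (W.getVert (W.length - 1)) ℓ := by
    have := W.adj_getVert_succ (i := W.length - 1) (by omega)
    rwa [show W.length - 1 + 1 = W.length by omega, Walk.getVert_length] at this
  have hdegℓ : G.degree ℓ = 1 := by
    have hnb : G.neighborFinset ℓ = {W.getVert (W.length - 1)} := by
      apply Finset.eq_singleton_iff_unique_mem.mpr
      constructor
      · rw [mem_neighborFinset]; exact hpen.symm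
      · intro y hy
        rw [mem_neighborFinset] at hy
        have hyW : y ∈ W.support := h_extend y hy
        -- the walk from y to ℓ along W must be the single edge
        have hd : (W.dropUntil y hyW).IsPath := hWp.dropUntil hyW
        have he : (Walk.cons hy.symm Walk.nil : G.Walk y ℓ).IsPath := by
          rw [Walk.cons_isPath_iff]
          exact ⟨Walk.IsPath.nil, by simp [hy.ne']⟩
        have heq := huniq _ _ hd he
        have hlen1 : (W.dropUntil y hyW).length = 1 := by rw [heq]; rfl
        have hts := W.take_spec hyW
        have hlent : (W.takeUntil y hyW).length = W.length - 1 := by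
          have := congrArg Walk.length hts
          rw [Walk.length_append, hlen1] at this
          omega
        have := congrArg (fun q => Walk.getVert q (W.length - 1)) hts
        rw [Walk.getVert_append] at this
        rw [hlent] at this
        simp only [lt_irrefl, if_false, Nat.sub_self, Walk.getVert_zero] at this
        exact this
    rw [← card_neighborFinset_eq_degree, hnb, Finset.card_singleton]
  -- Q : path from v to ℓ
  set Q : G.Walk v ℓ := W.dropUntil v hvW with hQ
  have hQp : Q.IsPath := hWp.dropUntil hvW
  have hQend : Q.getVert Q.length = ℓ := Walk.getVert_length Q
  -- interior vertices of Q differ from c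
  have hc_notin : ∀ j, 1 ≤ j → j ≤ Q.length → Q.getVert j ≠ c := by
    intro j hj1 hj2 hjc
    have hcQ : c ∈ Q.support := hjc ▸ getVert_mem_support' Q j
    rcases List.mem_cons.mp (Q.support_eq_cons ▸ hcQ) with h | h
    · -- c = v : then getVert j = getVert 0 with j ≥ 1
      have : Q.getVert j = Q.getVert 0 := by rw [Walk.getVert_zero, hjc, h]
      have := getVert_inj' hQp hj2 (by omega) this
      omega
    · -- c in tail of Q.support, but c is the head of takeUntil
      have hts := W.take_spec hvW
      have hnodup := hWp.support_nodup
      rw [← hts, Walk.support_append] at hnodup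
      have hdisj := List.disjoint_of_nodup_append hnodup
      exact hdisj (W.takeUntil v hvW).start_mem_support h
  -- define the escape path
  refine ⟨Q.length + 1, fun i => Q.getVert (i - 1), by omega, ?_, ?_, ?_, ?_, by simp⟩
  · intro a ha b hb hab
    simp only [Set.mem_Icc] at ha hb
    have := getVert_inj' hQp (i := a - 1) (j := b - 1) (by omega) (by omega) hab
    omega
  · intro i h1 h2
    have h3 := Q.adj_getVert_succ (i := i - 1) (by omega)
    rw [show i - 1 + 1 = i by omega] at h3
    show G.Adj (Q.getVert (i - 1)) (Q.getVert (i + 1 - 1))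
    rwa [show i + 1 - 1 = i from rfl]
  · show G.degree (Q.getVert (Q.length + 1 - 1)) = 1
    rw [show Q.length + 1 - 1 = Q.length from rfl, hQend, hdegℓ]
  · intro i h1 h2
    show G.degree (Q.getVert (i - 1)) = 2
    set j := i - 1 with hj
    have hj1 : 1 ≤ j := by omega
    have hj2 : j + 1 ≤ Q.length := by omega
    have hne : Q.getVert j ≠ c := hc_notin j hj1 (by omega)
    have hle : G.degree (Q.getVert j) ≤ 2 := by
      by_contra h
      exact hne (hcuniq _ (by omega))
    have ha1 : G.Adj (Q.getVert (j - 1)) (Q.getVert j) := by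
      have := Q.adj_getVert_succ (i := j - 1) (by omega)
      rwa [show j - 1 + 1 = j by omega] at this
    have ha2 : G.Adj (Q.getVert j) (Q.getVert (j + 1)) :=
      Q.adj_getVert_succ (by omega)
    have hnev : Q.getVert (j - 1) ≠ Q.getVert (j + 1) := by
      intro h
      have := getVert_inj' hQp (i := j - 1) (j := j + 1) (by omega) (by omega) h
      omega
    have hsub : {Q.getVert (j - 1), Q.getVert (j + 1)} ⊆ G.neighborFinset (Q.getVert j) := by
      intro z hz
      rw [mem_neighborFinset]
      rcases Finset.mem_insert.mp hz with h | h
      · rw [h]; exact ha1.symm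
      · rw [Finset.mem_singleton.mp h]; exact ha2
    have hge : 2 ≤ G.degree (Q.getVert j) := by
      have := Finset.card_le_card hsub
      rwa [Finset.card_pair hnev, card_neighborFinset_eq_degree] at this
    omega

lemma flip_card_le [Fintype V] (G : SimpleGraph V) (k : ℕ) (n : ℕ) (p : ℕ → V)
    (hn : 2 ≤ n) (hinj : Set.InjOn p (Set.Icc 1 n))
    (hadj : ∀ i, 1 ≤ i → i < n → G.Adj (p i) (p (i + 1)))
    (hleaf : G.degree (p n) = 1)
    (hint : ∀ i, 2 ≤ i → i + 1 ≤ n → G.degree (p i) = 2) :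
    (star G k (p 1)).card ≤ (star G k (p n)).card := by
  classical
  set f := flipP n p with hf
  have hicc : ∀ {i : ℕ}, 1 ≤ i → i ≤ n → i ∈ Set.Icc 1 n := fun h1 h2 => Set.mem_Icc.mpr ⟨h1, h2⟩
  have hpinj : ∀ {i j : ℕ}, 1 ≤ i → i ≤ n → 1 ≤ j → j ≤ n → p i = p j → i = j := by
    intro i j h1 h2 h3 h4 h
    exact hinj (hicc h1 h2) (hicc h3 h4) h
  have hfp : ∀ i, 1 ≤ i → i ≤ n → f (p i) = p (n + 1 - i) := by
    intro i h1 h2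
    have hex : ∃ j, 1 ≤ j ∧ j ≤ n ∧ p j = p i := ⟨i, h1, h2, rfl⟩
    rw [hf, flipP]
    simp only [dif_pos hex]
    have hspec := hex.choose_spec
    rw [hpinj hspec.1 hspec.2.1 h1 h2 hspec.2.2]
  have hfoff : ∀ x, (¬ ∃ i, 1 ≤ i ∧ i ≤ n ∧ p i = x) → f x = x := by
    intro x hx
    rw [hf, flipP]
    simp only [dif_neg hx]
  -- injectivity of the flip
  have hfinj : Function.Injective f := by
    intro x y hxy
    by_cases hx : ∃ i, 1 ≤ i ∧ i ≤ n ∧ p i = x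
    · obtain ⟨i, hi1, hi2, rfl⟩ := hx
      rw [hfp i hi1 hi2] at hxy
      by_cases hy : ∃ j, 1 ≤ j ∧ j ≤ n ∧ p j = y
      · obtain ⟨j, hj1, hj2, rfl⟩ := hy
        rw [hfp j hj1 hj2] at hxy
        have := hpinj (by omega) (by omega) (by omega) (by omega) hxy
        have : i = j := by omega
        rw [this]
      · rw [hfoff y hy] at hxy
        exact absurd ⟨n + 1 - i, by omega, by omega, hxy⟩ hy
    · by_cases hy : ∃ j, 1 ≤ j ∧ j ≤ n ∧ p j = y
      · obtain ⟨j, hj1, hj2, rfl⟩ := hy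
        rw [hfp j hj1 hj2, hfoff x hx] at hxy
        exact absurd ⟨n + 1 - j, by omega, by omega, hxy.symm⟩ hx
      · rw [hfoff x hx, hfoff y hy] at hxy
        exact hxy
  -- no chords on the path
  have chord1 : ∀ a b, 1 ≤ a → 1 ≤ b → b ≤ n → a + 2 ≤ b → ¬ G.Adj (p a) (p b) := by
    intro a b ha hb hbn hab hAdj
    have h1 : G.Adj (p (b - 1)) (p b) := by
      have := hadj (b - 1) (by omega) (by omega)
      rwa [show b - 1 + 1 = b by omega] at this
    have hne1 : p a ≠ p (b - 1) := fun h => by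
      have := hpinj ha (by omega) (by omega) (by omega) h; omega
    by_cases hbn' : b = n
    · subst hbn'
      have hsub : {p a, p (b - 1)} ⊆ G.neighborFinset (p b) := by
        intro z hz
        rw [mem_neighborFinset]
        rcases Finset.mem_insert.mp hz with h | h
        · rw [h]; exact hAdj.symm
        · rw [Finset.mem_singleton.mp h]; exact h1.symm
      have := Finset.card_le_card hsub
      rw [Finset.card_pair hne1, card_neighborFinset_eq_degree] at this
      omega
    · have hdeg := hint b (by omega) (by omega)
      have h2 : G.Adj (p b) (p (b + 1)) := hadj b (by omega) (by omega)
      have hne2 : p a ≠ p (b + 1) := fun h => by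
        have := hpinj ha (by omega) (by omega) (by omega) h; omega
      have hne3 : p (b - 1) ≠ p (b + 1) := fun h => by
        have := hpinj (i := b - 1) (j := b + 1) (by omega) (by omega) (by omega) (by omega) h
        omega
      have hsub : {p a, p (b - 1), p (b + 1)} ⊆ G.neighborFinset (p b) := by
        intro z hz
        rw [mem_neighborFinset]
        rcases Finset.mem_insert.mp hz with h | h
        · rw [h]; exact hAdj.symm
        rcases Finset.mem_insert.mp h with h | h
        · rw [h]; exact h1.symm
        · rw [Finset.mem_singleton.mp h]; exact h2
      have hcard : ({p a, p (b - 1), p (b + 1)} : Finset V).card = 3 := by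
        rw [Finset.card_insert_of_notMem (by simp [hne1, hne2]),
          Finset.card_pair hne3]
      have := Finset.card_le_card hsub
      rw [hcard, card_neighborFinset_eq_degree] at this
      omega
  have chord : ∀ a b, 1 ≤ a → a ≤ n → 1 ≤ b → b ≤ n → G.Adj (p a) (p b) →
      b = a + 1 ∨ a = b + 1 := by
    intro a b ha han hb hbn hAdj
    by_contra hcon
    push_neg at hcon
    have hne : a ≠ b := fun h => G.loopless.irrefl _ (h ▸ hAdj)
    rcases Nat.lt_or_ge a b with h | h
    · exact chord1 a b ha hb hbn (by omega) hAdj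
    · exact chord1 b a hb ha han (by omega) hAdj.symm
  -- no edges from interior path vertices to off-path vertices
  have offadj : ∀ x, (¬ ∃ i, 1 ≤ i ∧ i ≤ n ∧ p i = x) →
      ∀ m, 2 ≤ m → m ≤ n → ¬ G.Adj (p m) x := by
    intro x hx m hm2 hmn hAdj
    have h1 : G.Adj (p (m - 1)) (p m) := by
      have := hadj (m - 1) (by omega) (by omega)
      rwa [show m - 1 + 1 = m by omega] at this
    have hne1 : x ≠ p (m - 1) := fun h => hx ⟨m - 1, by omega, by omega, h.symm⟩
    by_cases hmn' : m = n
    · subst hmn'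
      have hsub : {x, p (m - 1)} ⊆ G.neighborFinset (p m) := by
        intro z hz
        rw [mem_neighborFinset]
        rcases Finset.mem_insert.mp hz with h | h
        · rw [h]; exact hAdj
        · rw [Finset.mem_singleton.mp h]; exact h1.symm
      have := Finset.card_le_card hsub
      rw [Finset.card_pair hne1, card_neighborFinset_eq_degree] at this
      omega
    · have hdeg := hint m (by omega) (by omega)
      have h2 : G.Adj (p m) (p (m + 1)) := hadj m (by omega) (by omega)
      have hne2 : x ≠ p (m + 1) := fun h => hx ⟨m + 1, by omega, by omega, h.symm⟩
      have hne3 : p (m - 1) ≠ p (m + 1) := fun h => by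
        have := hpinj (i := m - 1) (j := m + 1) (by omega) (by omega) (by omega) (by omega) h
        omega
      have hsub : {x, p (m - 1), p (m + 1)} ⊆ G.neighborFinset (p m) := by
        intro z hz
        rw [mem_neighborFinset]
        rcases Finset.mem_insert.mp hz with h | h
        · rw [h]; exact hAdj
        rcases Finset.mem_insert.mp h with h | h
        · rw [h]; exact h1.symm
        · rw [Finset.mem_singleton.mp h]; exact h2
      have hcard : ({x, p (m - 1), p (m + 1)} : Finset V).card = 3 := by
        rw [Finset.card_insert_of_notMem (by simp [hne1, hne2]),
          Finset.card_pair hne3]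
      have := Finset.card_le_card hsub
      rw [hcard, card_neighborFinset_eq_degree] at this
      omega
  -- the injection on stars
  apply Finset.card_le_card_of_injOn (fun A => A.image f)
  · intro A hA
    simp only [_root_.star, Finset.mem_coe, Finset.mem_filter, Finset.mem_univ, true_and] at hA ⊢
    obtain ⟨hcard, hmem, hind⟩ := hA
    refine ⟨by rw [Finset.card_image_of_injective _ hfinj]; exact hcard, ?_, ?_⟩
    · refine Finset.mem_image.mpr ⟨p 1, hmem, ?_⟩
      rw [hfp 1 (by omega) (by omega), show n + 1 - 1 = n from rfl]
    · intro x hx y hy hxy hAdj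
      obtain ⟨x₀, hx₀A, rfl⟩ := Finset.mem_image.mp hx
      obtain ⟨y₀, hy₀A, rfl⟩ := Finset.mem_image.mp hy
      have hxy₀ : x₀ ≠ y₀ := fun h => hxy (h ▸ rfl)
      by_cases hx0 : ∃ i, 1 ≤ i ∧ i ≤ n ∧ p i = x₀
      · obtain ⟨i, hi1, hi2, rfl⟩ := hx0
        rw [hfp i hi1 hi2] at hAdj hxy
        by_cases hy0 : ∃ j, 1 ≤ j ∧ j ≤ n ∧ p j = y₀
        · obtain ⟨j, hj1, hj2, rfl⟩ := hy0
          rw [hfp j hj1 hj2] at hAdj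
          have hij : i ≠ j := fun h => hxy₀ (h ▸ rfl)
          rcases chord _ _ (by omega) (by omega) (by omega) (by omega) hAdj with h | h
          · -- n+1-j = n+2-i, so i = j+1
            have hij' : i = j + 1 := by omega
            have hja : G.Adj (p j) (p i) := hij' ▸ hadj j hj1 (by omega)
            exact hind _ hy₀A _ hx₀A
              (fun hh => by have := hpinj hj1 hj2 hi1 hi2 hh; omega) hja
          · have hij' : j = i + 1 := by omega
            have hia : G.Adj (p i) (p j) := hij' ▸ hadj i hi1 (by omega)
            exact hind _ hx₀A _ hy₀A
              (fun hh => by have := hpinj hi1 hi2 hj1 hj2 hh; omega) hia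
        · rw [hfoff y₀ hy0] at hAdj
          by_cases hi : i = n
          · -- flip sends p n to p 1; y₀ adjacent to p 1 = v ∈ A
            rw [show n + 1 - i = 1 by omega] at hAdj
            have hne : p 1 ≠ y₀ := fun h => hy0 ⟨1, le_refl 1, by omega, h⟩
            exact hind _ hmem _ hy₀A hne hAdj
          · exact offadj y₀ hy0 (n + 1 - i) (by omega) (by omega) hAdj
      · rw [hfoff x₀ hx0] at hAdj hxy
        by_cases hy0 : ∃ j, 1 ≤ j ∧ j ≤ n ∧ p j = y₀
        · obtain ⟨j, hj1, hj2, rfl⟩ := hy0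
          rw [hfp j hj1 hj2] at hAdj
          by_cases hj : j = n
          · rw [show n + 1 - j = 1 by omega] at hAdj
            have hne : p 1 ≠ x₀ := fun h => hx0 ⟨1, le_refl 1, by omega, h⟩
            exact hind _ hmem _ hx₀A hne hAdj.symm
          · exact offadj x₀ hx0 (n + 1 - j) (by omega) (by omega) hAdj.symm
        · rw [hfoff y₀ hy0] at hAdj
          exact hind _ hx₀A _ hy₀A hxy₀ hAdj
  · intro A hA B hB h
    exact Finset.image_injective hfinj h

end Aux

/-- in a spider (a tree with exactly one vertex of degree at least 3),
every vertex has an escape path to some leaf; consequently for every `k ≥ 1` and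
every vertex `v` there is a leaf `ℓ` with `|I^k(v)| ≤ |I^k(ℓ)|`. -/
theorem spider_HK [Fintype V] (G : SimpleGraph V) (hT : G.IsTree)
    (c : V) (hc : 3 ≤ G.degree c) (hcuniq : ∀ w : V, 3 ≤ G.degree w → w = c) :
    (∀ v : V, ∃ (n : ℕ) (p : ℕ → V) (ℓ : V), G.degree ℓ = 1 ∧
        IsEscapePath G n p ∧ p 1 = v ∧ p n = ℓ) ∧
      ∀ k : ℕ, 1 ≤ k → ∀ v : V, ∃ ℓ : V, G.degree ℓ = 1 ∧
        (star G k v).card ≤ (star G k ℓ).card := by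
  have master := fun v => exists_strong_escape G hT c hc hcuniq v
  constructor
  · intro v
    obtain ⟨n, p, h1, h2, h3, h4, h5, h6⟩ := master v
    exact ⟨n, p, p n, h4, ⟨h1, h2, h3, h4, fun i hi hi' => h5 i hi (by omega)⟩, h6, rfl⟩
  · intro k hk v
    obtain ⟨n, p, h1, h2, h3, h4, h5, h6⟩ := master v
    rcases Nat.lt_or_ge n 2 with h | h
    · have hn1 : n = 1 := by omega
      subst hn1
      refine ⟨v, ?_, le_refl _⟩
      rw [← h6]; exact h4
    · refine ⟨p n, h4, ?_⟩
      rw [← h6]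
      exact flip_card_le G k n p h h2 h3 h4 h5
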